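/- Let Δ ∈ (0,1), p ∈ (0,1) with p+Δ < 1, and let f(p) = ( p^p(1-p)^{1-p} / ((p+Δ)^{p+Δ}(1-p-Δ)^{1-p-Δ}) )^{1/Δ}. Then p < 1/(f(p)+1) < p + Δ; i.e., the KL-equidistant threshold between Bernoulli parameters p and p+Δ lies strictly between them. -/

import Mathlib

/-- The function `f` from the HCS quantizer. -/
noncomputable def hcsF (Δ p : ℝ) : ℝ :=
  ((p ^ p * (1 - p) ^ (1 - p)) /
    ((p + Δ) ^ (p + Δ) * (1 - p - Δ) ^ (1 - p - Δ))) ^ (1 / Δ)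

private noncomputable def hcsL (x : ℝ) : ℝ := x * Real.log x + (1 - x) * Real.log (1 - x)

private lemma hcsL_hasDeriv {x : ℝ} (hx0 : 0 < x) (hx1 : x < 1) :
    HasDerivAt hcsL (Real.log x - Real.log (1 - x)) x := by
  have h1x : (0:ℝ) < 1 - x := by linarith
  have h1 : HasDerivAt (fun y : ℝ => y * Real.log y) (Real.log x + 1) x := by
    have := (hasDerivAt_id x).mul (Real.hasDerivAt_log hx0.ne')
    convert this using 1
    all_goals try rfl
    simp [hx0.ne']
  have h2 : HasDerivAt (fun y : ℝ => (1 - y) * Real.log (1 - y))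
      (-(Real.log (1 - x) + 1)) x := by
    have hs : HasDerivAt (fun y : ℝ => 1 - y) (-1) x := by
      simpa using (hasDerivAt_id x).const_sub (1:ℝ)
    have hlog : HasDerivAt (fun y : ℝ => Real.log (1 - y)) ((1 - x)⁻¹ * (-1)) x :=
      (Real.hasDerivAt_log h1x.ne').comp x hs
    have := hs.mul hlog
    convert this using 1
    all_goals try rfl
    field_simp
    ring
  have := h1.add h2
  convert this using 1
  all_goals try rfl
  ring

/-- The KL-equidistant threshold `1/(f(p)+1)` lies strictly between `p` and `p+Δ`. -/
theorem hcs_threshold_between (p Δ : ℝ) (hΔ : Δ ∈ Set.Ioo (0:ℝ) 1)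
    (hp : p ∈ Set.Ioo (0:ℝ) 1) (hpΔ : p + Δ < 1) :
    p < 1 / (hcsF Δ p + 1) ∧ 1 / (hcsF Δ p + 1) < p + Δ := by
  obtain ⟨hΔ0, hΔ1⟩ := hΔ
  obtain ⟨hp0, hp1⟩ := hp
  have hq0 : 0 < p + Δ := by linarith
  have h1p : 0 < 1 - p := by linarith
  have h1q : 0 < 1 - p - Δ := by linarith
  -- MVT for hcsL on [p, p+Δ]
  have hcont : ContinuousOn hcsL (Set.Icc p (p + Δ)) := by
    apply Continuous.continuousOn
    unfold hcsL
    exact Real.continuous_mul_log.add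
      (Real.continuous_mul_log.comp (continuous_const.sub continuous_id))
  have hmvt := exists_hasDerivAt_eq_slope hcsL
      (fun x => Real.log x - Real.log (1 - x)) (by linarith : p < p + Δ) hcont
      (fun x hx => hcsL_hasDeriv (by linarith [hx.1]) (by linarith [hx.2]))
  obtain ⟨c, hc, hceq⟩ := hmvt
  have hc0 : 0 < c := lt_trans hp0 hc.1
  have hc1 : c < 1 := by linarith [hc.2]
  have hlow : Real.log p - Real.log (1 - p) < Real.log c - Real.log (1 - c) := by
    have := Real.log_lt_log hp0 hc.1
    have := Real.log_lt_log (by linarith : (0:ℝ) < 1 - c) (by linarith [hc.1] : 1 - c < 1 - p)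
    linarith
  have hhigh : Real.log c - Real.log (1 - c) < Real.log (p + Δ) - Real.log (1 - p - Δ) := by
    have := Real.log_lt_log hc0 hc.2
    have := Real.log_lt_log h1q (by linarith [hc.2] : 1 - p - Δ < 1 - c)
    linarith
  have hslope : Real.log c - Real.log (1 - c) = (hcsL (p + Δ) - hcsL p) / Δ := by
    simpa using hceq
  -- identify hcsF with exp of slope
  have hApos : 0 < p ^ p * (1 - p) ^ (1 - p) :=
    mul_pos (Real.rpow_pos_of_pos hp0 _) (Real.rpow_pos_of_pos h1p _)
  have hBpos : 0 < (p + Δ) ^ (p + Δ) * (1 - p - Δ) ^ (1 - p - Δ) :=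
    mul_pos (Real.rpow_pos_of_pos hq0 _) (Real.rpow_pos_of_pos h1q _)
  have hlogA : Real.log (p ^ p * (1 - p) ^ (1 - p)) = hcsL p := by
    rw [Real.log_mul (Real.rpow_pos_of_pos hp0 _).ne' (Real.rpow_pos_of_pos h1p _).ne',
      Real.log_rpow hp0, Real.log_rpow h1p, hcsL]
  have hlogB : Real.log ((p + Δ) ^ (p + Δ) * (1 - p - Δ) ^ (1 - p - Δ)) = hcsL (p + Δ) := by
    rw [Real.log_mul (Real.rpow_pos_of_pos hq0 _).ne' (Real.rpow_pos_of_pos h1q _).ne',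
      Real.log_rpow hq0, Real.log_rpow h1q, hcsL]
    ring_nf
  have hfval : hcsF Δ p = Real.exp ((hcsL p - hcsL (p + Δ)) / Δ) := by
    rw [hcsF, Real.rpow_def_of_pos (div_pos hApos hBpos), Real.log_div hApos.ne' hBpos.ne',
      hlogA, hlogB]
    ring_nf
  have hfpos : 0 < hcsF Δ p := hfval ▸ Real.exp_pos _
  -- first inequality: hcsF Δ p < (1-p)/p
  have hkey1 : hcsF Δ p < (1 - p) / p := by
    have hs : (hcsL p - hcsL (p + Δ)) / Δ < Real.log ((1 - p) / p) := by
      rw [Real.log_div h1p.ne' hp0.ne']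
      rw [hslope] at hlow
      have hneg : (hcsL p - hcsL (p + Δ)) / Δ = -((hcsL (p + Δ) - hcsL p) / Δ) := by ring
      linarith
    calc hcsF Δ p = Real.exp ((hcsL p - hcsL (p + Δ)) / Δ) := hfval
      _ < Real.exp (Real.log ((1 - p) / p)) := Real.exp_lt_exp.mpr hs
      _ = (1 - p) / p := Real.exp_log (div_pos h1p hp0)
  have hkey2 : (1 - p - Δ) / (p + Δ) < hcsF Δ p := by
    have hs : Real.log ((1 - p - Δ) / (p + Δ)) < (hcsL p - hcsL (p + Δ)) / Δ := by
      rw [Real.log_div h1q.ne' hq0.ne']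
      rw [hslope] at hhigh
      have hneg : (hcsL p - hcsL (p + Δ)) / Δ = -((hcsL (p + Δ) - hcsL p) / Δ) := by ring
      linarith
    calc (1 - p - Δ) / (p + Δ) = Real.exp (Real.log ((1 - p - Δ) / (p + Δ))) :=
        (Real.exp_log (div_pos h1q hq0)).symm
      _ < Real.exp ((hcsL p - hcsL (p + Δ)) / Δ) := Real.exp_lt_exp.mpr hs
      _ = hcsF Δ p := hfval.symm
  have hf1 : 0 < hcsF Δ p + 1 := by linarith
  constructor
  · rw [lt_div_iff₀ hf1]
    have : hcsF Δ p * p < 1 - p := by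
      calc hcsF Δ p * p < ((1 - p) / p) * p := by
            exact mul_lt_mul_of_pos_right hkey1 hp0
        _ = 1 - p := by field_simp
    nlinarith
  · rw [div_lt_iff₀ hf1]
    have : 1 - p - Δ < hcsF Δ p * (p + Δ) := by
      calc (1 - p - Δ) = ((1 - p - Δ) / (p + Δ)) * (p + Δ) := by field_simp
        _ < hcsF Δ p * (p + Δ) := mul_lt_mul_of_pos_right hkey2 hq0
    nlinarith
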